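/- arXiv:1602.07379 — 2 statements merged into one kernel-verified Lean document; each statement's English description precedes it below -/
import Mathlib

section
/- For a finite group Γ, the number of homomorphisms from the fundamental group of the closed orientable surface of genus g to Γ, weighted by 1/|Γ| (orbifold count of Γ-local systems), equals |Γ|^{2g-2} · Σ_χ (1/χ(1))^{2g-2}, the sum over irreducible complex characters of Γ. -/
open scoped BigOperators
open scoped commutatorElement

open CategoryTheory Module LinearMap
open scoped Classical

noncomputable section
set_option linter.unusedSectionVars false
set_option maxHeartbeats 1600000

namespace FrobAux
variable {Γ : Type} [Group Γ] [Fintype Γ]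

lemma cardC_ne : (Fintype.card Γ : ℂ) ≠ 0 := by
  exact_mod_cast Fintype.card_ne_zero

lemma ortho (V W : FDRep ℂ Γ) [Simple V] [Simple W] :
    ∑ g : Γ, V.character g * W.character g⁻¹
      = if Nonempty (V ≅ W) then (Fintype.card Γ : ℂ) else 0 := by
  letI : Fintype ↑(Γ) := (inferInstance : Fintype Γ)
  letI : Invertible (Fintype.card ↑(Γ) : ℂ) :=
    invertibleOfNonzero (by exact_mod_cast (Fintype.card_ne_zero (α := Γ)))
  have h : ∑ g : Γ, V.character g * W.character g⁻¹
      = (Fintype.card Γ : ℂ) • (if Nonempty (V ≅ W) then 1 else 0) := by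
    have := FDRep.char_orthonormal (k := ℂ) (G := Γ) V W
    rw [Nat.card_eq_fintype_card, inv_mul_eq_iff_eq_mul₀ (by exact_mod_cast (Fintype.card_ne_zero (α := Γ)))]
      at this
    rw [this]
    split <;> simp
  rw [h]
  split <;> simp


def IsInvariant (V : FDRep ℂ Γ) (p : Submodule ℂ V) : Prop :=
  ∀ g : Γ, ∀ v ∈ p, V.ρ g v ∈ p

def subRep (V : FDRep ℂ Γ) (p : Submodule ℂ V) (hp : IsInvariant V p) : FDRep ℂ Γ :=
  FDRep.of
    { toFun := fun g => (V.ρ g).restrict (hp g)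
      map_one' := by ext v; simp [LinearMap.restrict_apply]
      map_mul' := fun g h => by
        ext v; simp [LinearMap.restrict_apply, Module.End.mul_apply] }


lemma char_add_of_isCompl (V : FDRep ℂ Γ) (p q : Submodule ℂ V)
    (hp : IsInvariant V p) (hq : IsInvariant V q) (h : IsCompl p q) (x : Γ) :
    V.character x = (subRep V p hp).character x + (subRep V q hq).character x := by
  set e := Submodule.prodEquivOfIsCompl p q h
  have hkey : ∀ z : ↥p × ↥q, V.ρ x (e z)
      = e ((LinearMap.prodMap ((V.ρ x).restrict (hp x)) ((V.ρ x).restrict (hq x))) z) := by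
    rintro ⟨a, b⟩
    have h1 : e (a, b) = (a : V) + (b : V) := Submodule.coe_prodEquivOfIsCompl' p q h (a, b)
    have h2 : (LinearMap.prodMap ((V.ρ x).restrict (hp x)) ((V.ρ x).restrict (hq x))) (a, b)
        = ((V.ρ x).restrict (hp x) a, (V.ρ x).restrict (hq x) b) := rfl
    rw [h1, h2]
    have h3 : e ((V.ρ x).restrict (hp x) a, (V.ρ x).restrict (hq x) b)
        = ((V.ρ x).restrict (hp x) a : V) + ((V.ρ x).restrict (hq x) b : V) :=
      Submodule.coe_prodEquivOfIsCompl' p q h _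
    rw [h3]
    simp [LinearMap.restrict_apply, map_add]
  have key : V.ρ x = e.conj (LinearMap.prodMap ((V.ρ x).restrict (hp x)) ((V.ρ x).restrict (hq x))) := by
    apply LinearMap.ext
    intro v
    rw [LinearEquiv.conj_apply]
    simp only [LinearMap.coe_comp, Function.comp_apply, LinearEquiv.coe_coe]
    rw [← hkey (e.symm v), e.apply_symm_apply]
  show trace ℂ V (V.ρ x) = _
  rw [key, LinearMap.trace_conj', LinearMap.trace_prodMap']
  rfl

lemma schur_scalar (V : FDRep ℂ Γ) [Simple V] (T : V →ₗ[ℂ] V)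
    (hT : ∀ g : Γ, (V.ρ g) ∘ₗ T = T ∘ₗ (V.ρ g)) :
    T = (trace ℂ V T / (finrank ℂ V : ℂ)) • LinearMap.id ∧ (finrank ℂ V : ℂ) ≠ 0 := by
  have hdim : finrank ℂ (V ⟶ V) = 1 := by
    rw [FDRep.finrank_hom_simple_simple V V, if_pos ⟨Iso.refl V⟩]
  have hd0 : finrank ℂ V ≠ 0 := by
    intro hd
    have : Subsingleton V := Module.finrank_zero_iff.mp hd
    have hsub : Subsingleton (V ⟶ V) := by
      constructor
      intro f g
      apply Action.Hom.ext
      ext v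
      exact @Subsingleton.elim _ this _ _
    rw [finrank_zero_iff.mpr hsub] at hdim
    exact zero_ne_one hdim
  have hdC : (finrank ℂ V : ℂ) ≠ 0 := by exact_mod_cast hd0
  -- the endomorphism as a hom in FDRep
  let fT : V ⟶ V := ⟨ObjectProperty.homMk (ModuleCat.ofHom T), fun g => by ext v; simpa using (LinearMap.congr_fun (hT g) v).symm⟩
  have hid : (𝟙 V : V ⟶ V) ≠ 0 := by
    intro h0
    have : ∀ v : V, v = 0 := by
      intro v
      have := congrArg (fun f => f.hom.hom.hom) h0
      exact LinearMap.congr_fun this v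
    have : Subsingleton V := ⟨fun a b => by rw [this a, this b]⟩
    exact hd0 (Module.finrank_zero_iff.mpr this)
  have hspan : Submodule.span ℂ {(𝟙 V : V ⟶ V)} = ⊤ := by
    apply Submodule.eq_top_of_finrank_eq
    rw [finrank_span_singleton hid, hdim]
  have : fT ∈ Submodule.span ℂ {(𝟙 V : V ⟶ V)} := by rw [hspan]; trivial
  obtain ⟨c, hc⟩ := Submodule.mem_span_singleton.mp this
  have hchom : T = c • LinearMap.id := by
    have := congrArg (fun f => f.hom.hom.hom) hc
    exact this.symm
  have htr : trace ℂ V T = c * finrank ℂ V := by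
    rw [hchom]
    simp [LinearMap.trace_id, mul_comm]
  constructor
  · rw [htr, mul_div_assoc, div_self hdC, mul_one, hchom]
  · exact hdC


lemma simple_of_no_invariant (V : FDRep ℂ Γ) (h0 : finrank ℂ V ≠ 0)
    (h : ∀ p : Submodule ℂ V, IsInvariant V p → p = ⊥ ∨ p = ⊤) : Simple V := by
  constructor
  intro Y f hf
  constructor
  · -- IsIso f → f ≠ 0
    intro hiso h0f
    obtain ⟨g', hg1, hg2⟩ := hiso.out
    rw [h0f, Limits.comp_zero] at hg2
    have hz : ∀ v : V, v = 0 := by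
      intro v
      have h1 := congrArg (fun f => f.hom.hom.hom) hg2.symm
      exact LinearMap.congr_fun h1 v
    have : Subsingleton V := ⟨fun a b => by rw [hz a, hz b]⟩
    exact h0 (Module.finrank_zero_iff.mpr this)
  · -- f ≠ 0 → IsIso f
    intro hf0
    have hhom0 : f.hom.hom.hom ≠ 0 := fun hh => hf0 (Action.Hom.ext (FGModuleCat.hom_ext (hh)))
    have hcomm : ∀ (g : Γ) (y : Y), f.hom.hom.hom (Y.ρ g y) =
        V.ρ g (f.hom.hom.hom y) := by
      intro g y
      exact LinearMap.congr_fun (congrArg (fun φ => φ.hom.hom) (f.comm g)) y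
    have hrange : IsInvariant V (LinearMap.range f.hom.hom.hom) := by
      intro g v hv
      obtain ⟨y, rfl⟩ := hv
      exact ⟨Y.ρ g y, hcomm g y⟩
    have hrtop : LinearMap.range f.hom.hom.hom = ⊤ := by
      rcases h _ hrange with hb | ht
      · exact absurd (LinearMap.range_eq_bot.mp hb) hhom0
      · exact ht
    have hkinv : ∀ g : Γ, ∀ v ∈ LinearMap.ker f.hom.hom.hom, Y.ρ g v ∈
        LinearMap.ker f.hom.hom.hom := by
      intro g v hv
      rw [LinearMap.mem_ker] at hv ⊢
      have hy := hcomm g v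
      rw [hv, map_zero] at hy
      exact hy
    let K := LinearMap.ker f.hom.hom.hom
    let ι : subRep Y K hkinv ⟶ Y :=
      ⟨ObjectProperty.homMk (ModuleCat.ofHom K.subtype), fun g => by
        ext v
        show (Y.ρ g) (K.subtype v) = K.subtype ((Y.ρ g).restrict (hkinv g) v)
        rfl⟩
    have hι0 : ι ≫ f = 0 := by
      apply Action.Hom.ext
      rw [Action.zero_hom, Action.comp_hom]
      apply FGModuleCat.hom_ext; apply LinearMap.ext
      rintro ⟨v, hv⟩
      exact hv
    have hι := Limits.zero_of_comp_mono f hι0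
    have hK : K = ⊥ := by
      rw [Submodule.eq_bot_iff]
      intro v hv
      have h1 := congrArg (fun φ => φ.hom.hom.hom) hι
      exact LinearMap.congr_fun h1 ⟨v, hv⟩
    have hbij : Function.Bijective f.hom.hom.hom := by
      constructor
      · rw [← LinearMap.ker_eq_bot]; exact hK
      · rw [← LinearMap.range_eq_top]; exact hrtop
    let e := LinearEquiv.ofBijective f.hom.hom.hom hbij
    have hfe : ∀ y : Y, f.hom.hom.hom y = e y := fun _ => rfl
    let ginv : V ⟶ Y :=
      ⟨ObjectProperty.homMk (ModuleCat.ofHom e.symm.toLinearMap), fun g => by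
        ext v
        show e.symm ((V.ρ g) v) = (Y.ρ g) (e.symm v)
        apply hbij.injective
        rw [hfe, e.apply_symm_apply, hcomm g (e.symm v), hfe, e.apply_symm_apply]⟩
    exact ⟨⟨ginv, Action.Hom.ext (FGModuleCat.hom_ext ((LinearMap.ext fun y => e.symm_apply_apply y))),
      Action.Hom.ext (FGModuleCat.hom_ext ((LinearMap.ext fun v => e.apply_symm_apply v)))⟩⟩


lemma exists_invariant_compl (V : FDRep ℂ Γ) (p : Submodule ℂ V) (hp : IsInvariant V p) :
    ∃ q : Submodule ℂ V, IsInvariant V q ∧ IsCompl p q := by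
  obtain ⟨q₀, hq₀⟩ := Submodule.exists_isCompl p
  set e0 : V →ₗ[ℂ] V := p.subtype ∘ₗ (p.projectionOnto q₀ hq₀) with he0
  have he0mem : ∀ v : V, e0 v ∈ p := fun v => (p.projectionOnto q₀ hq₀ v).2
  have he0fix : ∀ v ∈ p, e0 v = v := by
    intro v hv
    show (p.subtype) (p.projectionOnto q₀ hq₀ v) = v
    rw [show v = ((⟨v, hv⟩ : p) : V) from rfl, Submodule.projectionOnto_apply_left hq₀]
    rfl
  set π : V →ₗ[ℂ] V :=
    (Fintype.card Γ : ℂ)⁻¹ • ∑ g : Γ, (V.ρ g) ∘ₗ e0 ∘ₗ (V.ρ g⁻¹) with hπ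
  have hcard : (Fintype.card Γ : ℂ) ≠ 0 := by exact_mod_cast Fintype.card_ne_zero
  have hmem : ∀ v : V, π v ∈ p := by
    intro v
    rw [hπ]
    simp only [LinearMap.smul_apply, LinearMap.sum_apply, LinearMap.coe_comp,
      Function.comp_apply]
    exact Submodule.smul_mem _ _ (Submodule.sum_mem _ fun g _ => hp g _ (he0mem _))
  have hfix : ∀ v ∈ p, π v = v := by
    intro v hv
    rw [hπ]
    simp only [LinearMap.smul_apply, LinearMap.sum_apply, LinearMap.coe_comp,
      Function.comp_apply]
    have : ∀ g : Γ, V.ρ g (e0 (V.ρ g⁻¹ v)) = v := by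
      intro g
      rw [he0fix _ (hp g⁻¹ v hv)]
      rw [← Module.End.mul_apply, ← map_mul, mul_inv_cancel, map_one, Module.End.one_apply]
    rw [Finset.sum_congr rfl fun g _ => this g]
    rw [Finset.sum_const, Finset.card_univ, ← Nat.cast_smul_eq_nsmul ℂ, smul_smul,
      inv_mul_cancel₀ hcard, one_smul]
  have hequiv : ∀ (h : Γ) (v : V), π (V.ρ h v) = V.ρ h (π v) := by
    intro h v
    rw [hπ]
    simp only [LinearMap.smul_apply, LinearMap.sum_apply, LinearMap.coe_comp,
      Function.comp_apply, map_smul, map_sum]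
    congr 1
    rw [← Equiv.sum_comp (Equiv.mulLeft h) (fun g => V.ρ g (e0 (V.ρ g⁻¹ (V.ρ h v))))]
    apply Finset.sum_congr rfl
    intro g _
    show V.ρ (h * g) (e0 (V.ρ (h * g)⁻¹ (V.ρ h v))) = V.ρ h (V.ρ g (e0 (V.ρ g⁻¹ v)))
    rw [← Module.End.mul_apply (V.ρ (h*g)⁻¹), ← map_mul, mul_inv_rev, inv_mul_cancel_right]
    rw [map_mul]
    rfl
  refine ⟨LinearMap.ker π, ?_, ?_⟩
  · intro g v hv
    rw [LinearMap.mem_ker] at hv ⊢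
    rw [hequiv g v, hv, map_zero]
  · constructor
    · rw [Submodule.disjoint_def]
      intro v hvp hvk
      rw [LinearMap.mem_ker] at hvk
      rw [← hfix v hvp, hvk]
    · rw [codisjoint_iff, Submodule.eq_top_iff']
      intro v
      rw [Submodule.mem_sup]
      refine ⟨π v, hmem v, v - π v, ?_, add_sub_cancel _ _⟩
      rw [LinearMap.mem_ker, map_sub, hfix _ (hmem v), sub_self]

lemma subRep_finrank (V : FDRep ℂ Γ) (p : Submodule ℂ V) (hp : IsInvariant V p) :
    finrank ℂ (subRep V p hp) = finrank ℂ p := rfl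

lemma exists_decomp (V : FDRep ℂ Γ) :
    ∃ (k : ℕ) (W : Fin k → FDRep ℂ Γ), (∀ i, Simple (W i)) ∧
      ∀ x : Γ, V.character x = ∑ i, (W i).character x := by
  generalize hn : finrank ℂ V = n
  induction n using Nat.strong_induction_on generalizing V with
  | _ n ih =>
    rcases Nat.eq_zero_or_pos n with hz | hpos
    · subst hz
      refine ⟨0, ![], fun i => i.elim0, fun x => ?_⟩
      have hsub : Subsingleton V := Module.finrank_zero_iff.mp hn
      have : V.ρ x = 0 := by
        apply LinearMap.ext
        intro v
        exact @Subsingleton.elim _ hsub _ _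
      show trace ℂ V (V.ρ x) = _
      rw [this, map_zero]
      simp
    · by_cases hsimp : Simple V
      · refine ⟨1, ![V], fun i => by fin_cases i <;> simpa, fun x => by simp⟩
      · have hex : ∃ p : Submodule ℂ V, IsInvariant V p ∧ p ≠ ⊥ ∧ p ≠ ⊤ := by
          by_contra hcon
          push_neg at hcon
          apply hsimp
          apply simple_of_no_invariant V (by omega)
          intro p hpinv
          by_cases hb : p = ⊥
          · exact Or.inl hb
          · exact Or.inr (hcon p hpinv hb)
        obtain ⟨p, hpinv, hpb, hpt⟩ := hex
        obtain ⟨q, hqinv, hcompl⟩ := exists_invariant_compl V p hpinv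
        have hqb : q ≠ ⊥ := by
          intro hq
          rw [hq] at hcompl
          exact hpt (by simpa using hcompl.codisjoint.eq_top)
        have hsum : finrank ℂ p + finrank ℂ q = n := by
          rw [← hn]
          exact Submodule.finrank_add_eq_of_isCompl hcompl
        have hppos : 0 < finrank ℂ p := by
          rcases Nat.eq_zero_or_pos (finrank ℂ p) with h0 | h
          · exact absurd (Submodule.finrank_eq_zero.mp h0) hpb
          · exact h
        have hqpos : 0 < finrank ℂ q := by
          rcases Nat.eq_zero_or_pos (finrank ℂ q) with h0 | h
          · exact absurd (Submodule.finrank_eq_zero.mp h0) hqb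
          · exact h
        obtain ⟨k1, W1, hW1s, hW1⟩ := ih (finrank ℂ p) (by omega) (subRep V p hpinv)
          (subRep_finrank V p hpinv)
        obtain ⟨k2, W2, hW2s, hW2⟩ := ih (finrank ℂ q) (by omega) (subRep V q hqinv)
          (subRep_finrank V q hqinv)
        refine ⟨k1 + k2, Fin.addCases W1 W2, ?_, ?_⟩
        · intro i
          refine Fin.addCases ?_ ?_ i
          · intro j; simpa using hW1s j
          · intro j; simpa using hW2s j
        · intro x
          rw [char_add_of_isCompl V p q hpinv hqinv hcompl x, hW1 x, hW2 x,
            Fin.sum_univ_add]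
          congr 1
          · exact Finset.sum_congr rfl fun j _ => by simp
          · exact Finset.sum_congr rfl fun j _ => by simp

lemma char_eq_trace (V : FDRep ℂ Γ) (x : Γ) : V.character x = trace ℂ V (V.ρ x) := rfl

/-- Lemma A: averaging a conjugate. -/
lemma sum_char_conj (V : FDRep ℂ Γ) [Simple V] (x y : Γ) :
    ∑ a : Γ, V.character (a * x * a⁻¹ * y)
      = (Fintype.card Γ : ℂ) / (finrank ℂ V : ℂ) * V.character x * V.character y := by
  set T : V →ₗ[ℂ] V := ∑ a : Γ, V.ρ (a * x * a⁻¹) with hTdef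
  have hT : ∀ g : Γ, (V.ρ g) ∘ₗ T = T ∘ₗ (V.ρ g) := by
    intro g
    rw [← Module.End.mul_eq_comp, ← Module.End.mul_eq_comp, hTdef, Finset.mul_sum,
      Finset.sum_mul]
    refine Fintype.sum_equiv (Equiv.mulLeft g) _ _ fun b => ?_
    rw [← map_mul, ← map_mul]
    congr 1
    show g * (b * x * b⁻¹) = (g * b) * x * (g * b)⁻¹ * g
    group
  obtain ⟨hsc, hd⟩ := schur_scalar V T hT
  have htr : trace ℂ V T = (Fintype.card Γ : ℂ) * V.character x := by
    rw [hTdef, map_sum]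
    have : ∀ a : Γ, trace ℂ V (V.ρ (a * x * a⁻¹)) = V.character x := fun a =>
      FDRep.char_conj V x a
    rw [Finset.sum_congr rfl fun a _ => this a, Finset.sum_const, Finset.card_univ,
      nsmul_eq_mul]
  have key : ∀ a : Γ, V.character (a * x * a⁻¹ * y) = trace ℂ V (V.ρ (a * x * a⁻¹) * V.ρ y) := by
    intro a
    rw [char_eq_trace, map_mul]
  rw [Finset.sum_congr rfl fun a _ => key a, ← map_sum, ← Finset.sum_mul, ← hTdef, hsc]
  rw [smul_mul_assoc, LinearMap.map_smul, htr]
  rw [show LinearMap.id * V.ρ y = V.ρ y from one_mul _, ← char_eq_trace]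
  simp only [smul_eq_mul]
  field_simp

/-- Lemma B: convolution of a character with itself. -/
lemma sum_char_conv (V : FDRep ℂ Γ) [Simple V] (w : Γ) :
    ∑ b : Γ, V.character b * V.character (b⁻¹ * w)
      = (Fintype.card Γ : ℂ) / (finrank ℂ V : ℂ) * V.character w := by
  set T : V →ₗ[ℂ] V := ∑ b : Γ, V.character b • V.ρ b⁻¹ with hTdef
  have hT : ∀ g : Γ, (V.ρ g) ∘ₗ T = T ∘ₗ (V.ρ g) := by
    intro g
    rw [← Module.End.mul_eq_comp, ← Module.End.mul_eq_comp, hTdef, Finset.mul_sum,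
      Finset.sum_mul]
    refine Fintype.sum_equiv (Equiv.mulRight g⁻¹ |>.trans (Equiv.mulLeft g)) _ _ fun b => ?_
    simp only [Equiv.trans_apply, Equiv.coe_mulRight, Equiv.coe_mulLeft]
    rw [mul_smul_comm, smul_mul_assoc, ← map_mul, ← map_mul]
    have hchar : V.character (g * (b * g⁻¹)) = V.character b := by
      rw [show g * (b * g⁻¹) = g * b * g⁻¹ by group]
      exact FDRep.char_conj V b g
    rw [hchar]
    congr 2
    group
  obtain ⟨hsc, hd⟩ := schur_scalar V T hT
  have htr : trace ℂ V T = (Fintype.card Γ : ℂ) := by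
    rw [hTdef, map_sum]
    have : ∀ b : Γ, trace ℂ V (V.character b • V.ρ b⁻¹)
        = V.character b * V.character b⁻¹ := by
      intro b
      rw [LinearMap.map_smul, smul_eq_mul, ← char_eq_trace]
    rw [Finset.sum_congr rfl fun b _ => this b, ortho V V, if_pos ⟨Iso.refl V⟩]
  have key : ∀ b : Γ, V.character b * V.character (b⁻¹ * w)
      = trace ℂ V ((V.character b • V.ρ b⁻¹) * V.ρ w) := by
    intro b
    rw [smul_mul_assoc, LinearMap.map_smul, smul_eq_mul, ← map_mul, ← char_eq_trace]
  rw [Finset.sum_congr rfl fun b _ => key b, ← map_sum, ← Finset.sum_mul, ← hTdef, hsc]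
  rw [smul_mul_assoc, LinearMap.map_smul, htr]
  rw [show LinearMap.id * V.ρ w = V.ρ w from one_mul _, ← char_eq_trace]
  simp only [smul_eq_mul]

/-- Lemma C: summing over a commutator. -/
lemma sum_char_commutator (V : FDRep ℂ Γ) [Simple V] (w : Γ) :
    ∑ z : Γ × Γ, V.character (⁅z.1, z.2⁆ * w)
      = ((Fintype.card Γ : ℂ) / (finrank ℂ V : ℂ)) ^ 2 * V.character w := by
  rw [Fintype.sum_prod_type]
  have inner : ∀ b : Γ, ∑ a : Γ, V.character (⁅a, b⁆ * w)
      = (Fintype.card Γ : ℂ) / (finrank ℂ V : ℂ) * V.character b * V.character (b⁻¹ * w) := by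
    intro b
    have : ∀ a : Γ, ⁅a, b⁆ * w = a * b * a⁻¹ * (b⁻¹ * w) := by
      intro a
      rw [commutatorElement_def]
      group
    rw [Finset.sum_congr rfl fun a _ => by rw [this a]]
    exact sum_char_conj V b (b⁻¹ * w)
  rw [show (∑ a : Γ, ∑ b : Γ, V.character (⁅a, b⁆ * w))
      = ∑ b : Γ, ∑ a : Γ, V.character (⁅a, b⁆ * w) from Finset.sum_comm]
  rw [Finset.sum_congr rfl fun b _ => inner b]
  rw [show (∑ b : Γ, (Fintype.card Γ : ℂ) / (finrank ℂ V : ℂ) * V.character b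
        * V.character (b⁻¹ * w))
      = (Fintype.card Γ : ℂ) / (finrank ℂ V : ℂ)
        * ∑ b : Γ, V.character b * V.character (b⁻¹ * w) by
    rw [Finset.mul_sum]; exact Finset.sum_congr rfl fun b _ => by ring]
  rw [sum_char_conv V w]
  ring

/-- Lemma D: summing over products of g commutators. -/
lemma sum_char_prod_comm (V : FDRep ℂ Γ) [Simple V] :
    ∀ (g : ℕ) (w : Γ),
      ∑ p : (Fin g → Γ) × (Fin g → Γ),
          V.character ((List.ofFn fun i : Fin g => ⁅p.1 i, p.2 i⁆).prod * w)
        = ((Fintype.card Γ : ℂ) / (finrank ℂ V : ℂ)) ^ (2 * g) * V.character w := by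
  intro g
  induction g with
  | zero =>
    intro w
    simp
  | succ g ih =>
    intro w
    let E : ((Γ × (Fin g → Γ)) × (Γ × (Fin g → Γ))) ≃ ((Fin (g+1) → Γ) × (Fin (g+1) → Γ)) :=
      Equiv.prodCongr (Fin.consEquiv fun _ => Γ) (Fin.consEquiv fun _ => Γ)
    rw [← Equiv.sum_comp E (fun p : (Fin (g+1) → Γ) × (Fin (g+1) → Γ) =>
      V.character ((List.ofFn fun i : Fin (g+1) => ⁅p.1 i, p.2 i⁆).prod * w))]
    have step : ∀ q : ((Γ × (Fin g → Γ)) × (Γ × (Fin g → Γ))),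
        (fun p : (Fin (g+1) → Γ) × (Fin (g+1) → Γ) =>
          V.character ((List.ofFn fun i : Fin (g+1) => ⁅p.1 i, p.2 i⁆).prod * w)) (E q)
        = V.character (⁅q.1.1, q.2.1⁆ *
            ((List.ofFn fun i : Fin g => ⁅q.1.2 i, q.2.2 i⁆).prod * w)) := by
      rintro ⟨⟨a0, ar⟩, ⟨b0, br⟩⟩
      show V.character ((List.ofFn fun i : Fin (g+1) =>
          ⁅(Fin.cons a0 ar : Fin (g+1) → Γ) i, (Fin.cons b0 br : Fin (g+1) → Γ) i⁆).prod * w) = _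
      rw [List.ofFn_succ]
      simp only [Fin.cons_zero, Fin.cons_succ, List.prod_cons]
      rw [mul_assoc]
    rw [Finset.sum_congr rfl fun q _ => step q]
    have swap : (∑ q : ((Γ × (Fin g → Γ)) × (Γ × (Fin g → Γ))),
          V.character (⁅q.1.1, q.2.1⁆
            * ((List.ofFn fun i : Fin g => ⁅q.1.2 i, q.2.2 i⁆).prod * w)))
        = ∑ r : ((Fin g → Γ) × (Fin g → Γ)), ∑ z : Γ × Γ,
            V.character (⁅z.1, z.2⁆
              * ((List.ofFn fun i : Fin g => ⁅r.1 i, r.2 i⁆).prod * w)) := by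
      rw [show (∑ r : ((Fin g → Γ) × (Fin g → Γ)), ∑ z : Γ × Γ,
            V.character (⁅z.1, z.2⁆
              * ((List.ofFn fun i : Fin g => ⁅r.1 i, r.2 i⁆).prod * w)))
          = ∑ r : ((Fin g → Γ) × (Fin g → Γ)), ∑ a0 : Γ, ∑ b0 : Γ,
            V.character (⁅a0, b0⁆
              * ((List.ofFn fun i : Fin g => ⁅r.1 i, r.2 i⁆).prod * w)) from
        Finset.sum_congr rfl fun r _ => Fintype.sum_prod_type _]
      rw [Fintype.sum_prod_type]
      rw [show (∑ x : Γ × (Fin g → Γ), ∑ y : Γ × (Fin g → Γ),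
            V.character (⁅x.1, y.1⁆ * ((List.ofFn fun i : Fin g => ⁅x.2 i, y.2 i⁆).prod * w)))
          = ∑ a0 : Γ, ∑ ar : (Fin g → Γ), ∑ b0 : Γ, ∑ br : (Fin g → Γ),
            V.character (⁅a0, b0⁆ * ((List.ofFn fun i : Fin g => ⁅ar i, br i⁆).prod * w)) by
        rw [Fintype.sum_prod_type]
        exact Finset.sum_congr rfl fun a0 _ => Finset.sum_congr rfl fun ar _ =>
          Fintype.sum_prod_type _]
      rw [Fintype.sum_prod_type]
      conv_lhs => rw [Finset.sum_comm]
      refine Finset.sum_congr rfl fun ar _ => ?_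
      refine (Finset.sum_congr rfl fun a0 _ => Finset.sum_comm).trans ?_
      exact Finset.sum_comm
    rw [swap]
    rw [Finset.sum_congr rfl fun r _ => sum_char_commutator V _]
    rw [← Finset.mul_sum, ih w]
    rw [show 2 * (g + 1) = 2 + 2 * g by ring, pow_add]
    ring


/-- The (left) regular representation of `Γ` on `Γ → ℂ`. -/
def regRep (Γ : Type) [Group Γ] : Representation ℂ Γ (Γ → ℂ) where
  toFun x := LinearMap.funLeft ℂ ℂ (fun y => x⁻¹ * y)
  map_one' := by
    apply LinearMap.ext; intro f; funext y
    simp [LinearMap.funLeft_apply]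
  map_mul' x₁ x₂ := by
    apply LinearMap.ext; intro f; funext y
    simp [LinearMap.funLeft_apply, Module.End.mul_apply, mul_assoc]

lemma regRep_char (x : Γ) :
    (FDRep.of (regRep Γ)).character x = if x = 1 then (Fintype.card Γ : ℂ) else 0 := by
  have h : (FDRep.of (regRep Γ)).character x = trace ℂ (Γ → ℂ) (regRep Γ x) := rfl
  rw [h, trace_eq_matrix_trace ℂ (Pi.basisFun ℂ Γ), Matrix.trace]
  have hdiag : ∀ i : Γ,
      Matrix.diag (LinearMap.toMatrix (Pi.basisFun ℂ Γ) (Pi.basisFun ℂ Γ) (regRep Γ x)) i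
        = if x = 1 then 1 else 0 := by
    intro i
    rw [Matrix.diag_apply, LinearMap.toMatrix_apply]
    simp only [Pi.basisFun_apply, Pi.basisFun_repr, regRep, MonoidHom.coe_mk, OneHom.coe_mk,
      LinearMap.funLeft_apply]
    rw [Pi.single_apply]
    congr 1
    simp only [eq_iff_iff]
    constructor
    · intro hx
      have : x * (x⁻¹ * i) = x * i := by rw [hx]
      rw [← mul_assoc, mul_inv_cancel, one_mul] at this
      exact (mul_eq_right.mp this.symm)
    · intro hx
      rw [hx]; simp
  rw [Finset.sum_congr rfl fun i _ => hdiag i]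
  rw [Finset.sum_const, Finset.card_univ]
  split <;> simp


lemma simple_finrank_ne (V : FDRep ℂ Γ) [Simple V] : ((finrank ℂ V : ℂ)) ≠ 0 :=
  (schur_scalar V 0 (by intro g; simp)).2

end FrobAux

open FrobAux

/-- Frobenius–Mednykh formula: for a finite group `Γ`, the orbifold count
of `Γ`-local systems on the closed orientable surface of genus `g`,
`#{(a₁,b₁,…,a_g,b_g) ∈ Γ^{2g} : ∏ ⁅aᵢ,bᵢ⁆ = 1} / |Γ|`, equals
`∑_χ (|Γ|/χ(1))^{2g-2}`, the sum over irreducible complex characters of `Γ`. -/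
theorem statement9 (Γ : Type) [Group Γ] [Fintype Γ] (g : ℕ)
    (s : Finset (Γ → ℂ))
    (hs : ∀ χ : Γ → ℂ, χ ∈ s ↔
      ∃ V : FDRep ℂ Γ, CategoryTheory.Simple V ∧ χ = fun x => FDRep.character V x) :
    (Nat.card {p : (Fin g → Γ) × (Fin g → Γ) //
        (List.ofFn fun i : Fin g => ⁅p.1 i, p.2 i⁆).prod = 1} : ℂ) / (Fintype.card Γ : ℂ)
      = ∑ χ ∈ s, ((Fintype.card Γ : ℂ) / χ 1) ^ (2 * (g : ℤ) - 2) := by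
  classical
  set nC : ℂ := (Fintype.card Γ : ℂ) with hnC
  have hn0 : nC ≠ 0 := cardC_ne
  set R : FDRep ℂ Γ := FDRep.of (regRep Γ) with hR
  obtain ⟨k, W, hWs, hWchar⟩ := exists_decomp R
  haveI : ∀ i, Simple (W i) := hWs
  set N : ℕ := Nat.card {p : (Fin g → Γ) × (Fin g → Γ) //
      (List.ofFn fun i : Fin g => ⁅p.1 i, p.2 i⁆).prod = 1} with hNdef
  -- Step A: N * n = sum of regular character over all tuples
  have stepA : (N : ℂ) * nC
      = ∑ p : (Fin g → Γ) × (Fin g → Γ),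
          R.character ((List.ofFn fun i : Fin g => ⁅p.1 i, p.2 i⁆).prod * 1) := by
    have h1 : ∀ p : (Fin g → Γ) × (Fin g → Γ),
        R.character ((List.ofFn fun i : Fin g => ⁅p.1 i, p.2 i⁆).prod * 1)
        = if (List.ofFn fun i : Fin g => ⁅p.1 i, p.2 i⁆).prod = 1 then nC else 0 := by
      intro p
      rw [mul_one, hR, regRep_char]
    rw [Finset.sum_congr rfl fun p _ => h1 p]
    rw [← Finset.sum_filter]
    rw [Finset.sum_const]
    have h2 : N = (Finset.univ.filter fun p : (Fin g → Γ) × (Fin g → Γ) =>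
        (List.ofFn fun i : Fin g => ⁅p.1 i, p.2 i⁆).prod = 1).card := by
      rw [hNdef, Nat.card_eq_fintype_card, Fintype.card_subtype]
    rw [h2]
    simp [mul_comm]
  -- Step B: decompose into the simple summands
  have stepB : (N : ℂ) * nC
      = ∑ i : Fin k, (nC / (finrank ℂ (W i) : ℂ)) ^ (2 * g) * ((W i).character 1) := by
    rw [stepA]
    have h1 : ∀ p : (Fin g → Γ) × (Fin g → Γ),
        R.character ((List.ofFn fun i : Fin g => ⁅p.1 i, p.2 i⁆).prod * 1)
        = ∑ i : Fin k, (W i).character ((List.ofFn fun i : Fin g => ⁅p.1 i, p.2 i⁆).prod * 1) :=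
      fun p => hWchar _
    rw [Finset.sum_congr rfl fun p _ => h1 p, Finset.sum_comm]
    exact Finset.sum_congr rfl fun i _ => sum_char_prod_comm (W i) g 1
  -- the character function of each summand lies in s
  set c : Fin k → (Γ → ℂ) := fun i => fun x => (W i).character x with hc
  have hcs : ∀ i, c i ∈ s := fun i => (hs (c i)).mpr ⟨W i, hWs i, rfl⟩
  -- Step C: multiplicity of each χ ∈ s among the W i equals χ 1
  have stepC : ∀ χ ∈ s, ((Finset.univ.filter fun i : Fin k => c i = χ).card : ℂ) = χ 1 := by
    intro χ hχ
    obtain ⟨V, hVsimple, hVchar⟩ := (hs χ).mp hχ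
    haveI := hVsimple
    have hiff : ∀ i : Fin k, (c i = χ) ↔ Nonempty (W i ≅ V) := by
      intro i
      constructor
      · intro hceq
        have horr := ortho (W i) V
        have hVV := ortho V V
        rw [if_pos ⟨Iso.refl V⟩] at hVV
        have heq : (∑ x : Γ, (W i).character x * V.character x⁻¹)
            = ∑ x : Γ, V.character x * V.character x⁻¹ := by
          refine Finset.sum_congr rfl fun x _ => ?_
          have : (W i).character x = V.character x := by
            have := congrFun hceq x
            rw [hVchar] at this
            exact this
          rw [this]
        rw [heq, hVV] at horr
        by_contra hne
        rw [if_neg hne] at horr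
        rw [hnC] at hn0
        exact hn0 horr
      · rintro ⟨iso⟩
        have := FDRep.char_iso iso
        rw [hVchar]
        funext x
        exact congrFun this x
    have h1 : ((Finset.univ.filter fun i : Fin k => c i = χ).card : ℂ)
        = ∑ i : Fin k, if Nonempty (W i ≅ V) then (1:ℂ) else 0 := by
      have : ((Finset.univ.filter fun i : Fin k => c i = χ).card : ℂ)
          = ∑ i : Fin k, if c i = χ then (1:ℂ) else 0 := by
        rw [Finset.sum_boole]
      rw [this]
      exact Finset.sum_congr rfl fun i _ => if_congr (hiff i) rfl rfl
    have h2 : ∀ i : Fin k, (if Nonempty (W i ≅ V) then (1:ℂ) else 0)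
        = nC⁻¹ * ∑ x : Γ, (W i).character x * V.character x⁻¹ := by
      intro i
      rw [ortho (W i) V]
      split
      · rw [hnC, inv_mul_cancel₀ cardC_ne]
      · rw [mul_zero]
    rw [h1, Finset.sum_congr rfl fun i _ => h2 i, ← Finset.mul_sum, Finset.sum_comm]
    have h3 : ∀ x : Γ, (∑ i : Fin k, (W i).character x * V.character x⁻¹)
        = R.character x * V.character x⁻¹ := by
      intro x
      rw [← Finset.sum_mul, ← hWchar x]
    rw [Finset.sum_congr rfl fun x _ => h3 x]
    have h4 : ∀ x : Γ, R.character x * V.character x⁻¹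
        = if x = 1 then nC * V.character x⁻¹ else 0 := by
      intro x
      rw [hR, regRep_char]
      split
      · rfl
      · rw [zero_mul]
    rw [Finset.sum_congr rfl fun x _ => h4 x, Finset.sum_ite_eq' Finset.univ (1:Γ)
      (fun x => nC * V.character x⁻¹), if_pos (Finset.mem_univ _)]
    rw [inv_one, ← mul_assoc, inv_mul_cancel₀ hn0, one_mul, hVchar]
  -- Step D: regroup the sum over the W i by character
  set F : (Γ → ℂ) → ℂ := fun χ => (nC / χ 1) ^ (2 * g) * χ 1 with hF
  have stepD : (N : ℂ) * nC = ∑ χ ∈ s, χ 1 * F χ := by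
    rw [stepB]
    have h1 : ∀ i : Fin k, (nC / (finrank ℂ (W i) : ℂ)) ^ (2 * g) * ((W i).character 1)
        = F (c i) := by
      intro i
      have hci : c i 1 = ((finrank ℂ (W i) : ℂ)) := FDRep.char_one (W i)
      rw [hF]
      show (nC / (finrank ℂ (W i) : ℂ)) ^ (2 * g) * ((W i).character 1)
        = (nC / c i 1) ^ (2 * g) * c i 1
      rw [hci, FDRep.char_one]
    rw [Finset.sum_congr rfl fun i _ => h1 i]
    rw [← Finset.sum_fiberwise_of_maps_to (fun i _ => hcs i) (fun i => F (c i))]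
    refine Finset.sum_congr rfl fun χ hχ => ?_
    have hfib : ∀ i ∈ Finset.univ.filter fun i : Fin k => c i = χ, F (c i) = F χ := by
      intro i hi
      rw [(Finset.mem_filter.mp hi).2]
    rw [Finset.sum_congr rfl hfib, Finset.sum_const, nsmul_eq_mul, stepC χ hχ]
  -- characters in s do not vanish at 1
  have hχ1ne : ∀ χ ∈ s, χ 1 ≠ 0 := by
    intro χ hχ
    obtain ⟨V, hVs, hVchar⟩ := (hs χ).mp hχ
    haveI := hVs
    have : χ 1 = ((finrank ℂ V : ℂ)) := by rw [hVchar]; exact FDRep.char_one V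
    rw [this]
    exact simple_finrank_ne V
  -- final algebra
  have hfinal : ∀ χ ∈ s, (nC / χ 1) ^ (2 * (g : ℤ) - 2)
      = (χ 1 * F χ) / nC ^ 2 := by
    intro χ hχ
    have hχ1 := hχ1ne χ hχ
    have hu : nC / χ 1 ≠ 0 := div_ne_zero hn0 hχ1
    have he : (2 * (g : ℤ) - 2) = ((2 * g : ℕ) : ℤ) - 2 := by push_cast; ring
    rw [he, zpow_sub₀ hu, zpow_natCast, hF]
    show (nC / χ 1) ^ (2 * g) / (nC / χ 1) ^ (2:ℤ) = χ 1 * ((nC / χ 1) ^ (2 * g) * χ 1) / nC ^ 2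
    rw [show ((2:ℤ)) = ((2:ℕ) : ℤ) by norm_num, zpow_natCast]
    field_simp
  rw [Finset.sum_congr rfl hfinal, ← Finset.sum_div, ← stepD, sq]
  rw [mul_div_mul_right _ _ hn0]
end
end

section
/- Let R be a commutative ring, A an R-algebra, and M an (A,A)-bimodule with the two R-actions agreeing. If A is Morita equivalent to R via a finitely generated projective generator P (so A ≅ End_R(P)), then the trace M ⊗_{A⊗A^op} A of the bimodule M = P ⊗_R N ⊗_R P^∨ (for an R-module N and P^∨ = Hom_R(P,R)) is isomorphic to N as an R-module. -/
open TensorProduct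

/-- decategorified Morita invariance of the trace: let `R` be a commutative
ring, `P` a finitely generated projective generator, `A = End_R P`, `N` an `R`-module, and
`M = P ⊗_R N ⊗_R P^∨` the induced `(A,A)`-bimodule (`A` acting on the left through `P` and
on the right through `P^∨ = Hom_R(P,R)` by precomposition).  Then the trace
`M ⊗_{A⊗A^op} A` — the coequalizer of the left and right `A`-actions, i.e. `M` modulo the
relations `a·m − m·a` — is isomorphic to `N` as an `R`-module.
(The dual `P^∨` is carried by an `R`-module `D` identified with `Hom_R(P,R)` via `ι`.) -/
theorem statement11 (R : Type*) [CommRing R]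
    (P : Type*) [AddCommGroup P] [Module R P]
    [Module.Finite R P] [Module.Projective R P]
    (hgen : Submodule.span R {x : R | ∃ (φ : P →ₗ[R] R) (p : P), x = φ p} = ⊤)
    (N : Type*) [AddCommGroup N] [Module R N]
    (D : Type*) [AddCommGroup D] [Module R D] (ι : D ≃ₗ[R] (P →ₗ[R] R))
    (Rel : Submodule R (P ⊗[R] (N ⊗[R] D)))
    (hRel : Rel = Submodule.span R
      {z | ∃ (a : Module.End R P) (p : P) (n : N) (φ : D),
        z = (a p) ⊗ₜ[R] (n ⊗ₜ[R] φ) - p ⊗ₜ[R] (n ⊗ₜ[R] (ι.symm (ι φ ∘ₗ a)))}) :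
    Nonempty (((P ⊗[R] (N ⊗[R] D)) ⧸ Rel) ≃ₗ[R] N) := by
  classical
  -- a finite dual family with ∑ F i (G i) = 1, from the generator hypothesis
  have h1 : (1 : R) ∈ Submodule.span R {x : R | ∃ (φ : P →ₗ[R] R) (p : P), x = φ p} := by
    rw [hgen]; trivial
  rw [Submodule.mem_span_set'] at h1
  obtain ⟨k, c, v, hv⟩ := h1
  choose Φ Pt hΦ using fun i => (v i).2
  set F : Fin k → (P →ₗ[R] R) := fun i => c i • Φ i with hF
  set G : Fin k → P := Pt with hG
  have hsum : ∑ i, F i (G i) = 1 := by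
    rw [← hv]
    refine Finset.sum_congr rfl fun i _ => ?_
    simp [hF, hG, ← hΦ i, smul_eq_mul]
    rw [hΦ i]
  -- the evaluation map
  let ev : P ⊗[R] (N ⊗[R] D) →ₗ[R] N :=
    TensorProduct.lift
      { toFun := fun p =>
          TensorProduct.lift ((LinearMap.lsmul R N ∘ₗ (ι.toLinearMap.flip p)).flip)
        map_add' := by
          intro p q
          apply TensorProduct.ext'
          intro n d
          simp only [TensorProduct.lift.tmul, LinearMap.flip_apply, LinearMap.comp_apply,
            LinearMap.lsmul_apply, map_add, LinearMap.add_apply, add_smul]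
        map_smul' := by
          intro r p
          apply TensorProduct.ext'
          intro n d
          simp only [TensorProduct.lift.tmul, LinearMap.flip_apply, LinearMap.comp_apply,
            LinearMap.lsmul_apply, map_smul, LinearMap.smul_apply, smul_assoc,
            RingHom.id_apply] }
  have ev_tmul : ∀ (p : P) (n : N) (d : D), ev (p ⊗ₜ[R] (n ⊗ₜ[R] d)) = (ι d p) • n := by
    intro p n d; rfl
  have hle : Rel ≤ LinearMap.ker ev := by
    rw [hRel, Submodule.span_le]
    rintro z ⟨a, p, n, φ, rfl⟩
    rw [SetLike.mem_coe, LinearMap.mem_ker, map_sub, ev_tmul, ev_tmul,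
      LinearEquiv.apply_symm_apply, LinearMap.comp_apply, sub_self]
  let evbar : ((P ⊗[R] (N ⊗[R] D)) ⧸ Rel) →ₗ[R] N := Rel.liftQ ev hle
  -- the back map
  let j : N →ₗ[R] ((P ⊗[R] (N ⊗[R] D)) ⧸ Rel) :=
    ∑ i, Rel.mkQ ∘ₗ (TensorProduct.mk R P (N ⊗[R] D) (G i)) ∘ₗ
      ((TensorProduct.mk R N D).flip (ι.symm (F i)))
  have j_apply : ∀ n : N,
      j n = ∑ i, Rel.mkQ ((G i) ⊗ₜ[R] (n ⊗ₜ[R] (ι.symm (F i)))) := by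
    intro n
    simp [j, LinearMap.sum_apply]
  -- key relation in the quotient
  have key : ∀ (a : Module.End R P) (p : P) (n : N) (φ : D),
      Rel.mkQ ((a p) ⊗ₜ[R] (n ⊗ₜ[R] φ)) =
      Rel.mkQ (p ⊗ₜ[R] (n ⊗ₜ[R] (ι.symm (ι φ ∘ₗ a)))) := by
    intro a p n φ
    rw [← sub_eq_zero, ← map_sub, Submodule.mkQ_apply, Submodule.Quotient.mk_eq_zero]
    rw [hRel]
    exact Submodule.subset_span ⟨a, p, n, φ, rfl⟩
  have h₁ : evbar ∘ₗ j = LinearMap.id := by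
    ext n
    simp only [LinearMap.comp_apply, LinearMap.id_apply, j_apply, map_sum]
    have : ∀ i, evbar (Rel.mkQ ((G i) ⊗ₜ[R] (n ⊗ₜ[R] (ι.symm (F i))))) = (F i (G i)) • n := by
      intro i
      simp [evbar, Submodule.liftQ_apply, ev_tmul]
    rw [Finset.sum_congr rfl fun i _ => this i, ← Finset.sum_smul, hsum, one_smul]
  have main : ∀ z : P ⊗[R] (N ⊗[R] D), j (ev z) = Rel.mkQ z := by
    intro z
    induction z using TensorProduct.induction_on with
    | zero => simp
    | add x y hx hy => rw [map_add, map_add, map_add, hx, hy]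
    | tmul p nd =>
      induction nd using TensorProduct.induction_on with
      | zero => simp
      | add x y hx hy => rw [tmul_add, map_add, map_add, map_add, hx, hy]
      | tmul n d =>
        rw [ev_tmul, j_apply]
        have step : ∀ i, Rel.mkQ ((G i) ⊗ₜ[R] (((ι d p) • n) ⊗ₜ[R] (ι.symm (F i)))) =
            (F i (G i)) • Rel.mkQ (p ⊗ₜ[R] (n ⊗ₜ[R] d)) := by
          intro i
          set a : Module.End R P := (LinearMap.toSpanSingleton R P (G i)) ∘ₗ (ι d) with ha
          have hap : a p = (ι d p) • G i := rfl
          have h1 : (G i) ⊗ₜ[R] (((ι d p) • n) ⊗ₜ[R] (ι.symm (F i)))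
              = (a p) ⊗ₜ[R] (n ⊗ₜ[R] (ι.symm (F i))) := by
            rw [hap]
            calc (G i) ⊗ₜ[R] (((ι d p) • n) ⊗ₜ[R] (ι.symm (F i)))
                = (G i) ⊗ₜ[R] ((ι d p) • (n ⊗ₜ[R] (ι.symm (F i)))) := by rw [smul_tmul']
              _ = ((ι d p) • G i) ⊗ₜ[R] (n ⊗ₜ[R] (ι.symm (F i))) := (smul_tmul _ _ _).symm
          rw [h1, key a p n (ι.symm (F i))]
          have h2 : ι (ι.symm (F i)) ∘ₗ a = (F i (G i)) • (ι d) := by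
            apply LinearMap.ext
            intro x
            simp [ha, LinearMap.toSpanSingleton_apply, smul_eq_mul, mul_comm]
          rw [h2, map_smul, LinearEquiv.symm_apply_apply, tmul_smul, tmul_smul, map_smul]
        rw [Finset.sum_congr rfl fun i _ => step i, ← Finset.sum_smul, hsum, one_smul]
  have h₂ : j ∘ₗ evbar = LinearMap.id := by
    apply Submodule.linearMap_qext
    apply LinearMap.ext
    intro z
    simp only [LinearMap.comp_apply, Submodule.mkQ_apply, LinearMap.id_apply]
    have : evbar (Submodule.Quotient.mk z) = ev z := rfl
    rw [this]
    exact main z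
  exact ⟨LinearEquiv.ofLinear evbar j h₁ h₂⟩
end
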